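/- Tropical trek rule: for a DAG G on [n] and nonnegative coefficient matrix C supported on G, the tropical covariance matrix Σ^trop = C* ⊙ (C*)^T satisfies Σ^trop_{ij} = max over all treks τ from i to j of the product of the edge weights c_{ℓm} over all edges m → ℓ of τ. -/

import Mathlib

open Finset

noncomputable def tropMul {n : ℕ} (A B : Matrix (Fin n) (Fin n) NNReal) :
    Matrix (Fin n) (Fin n) NNReal :=
  fun i j => univ.sup fun l => A i l * B l j

noncomputable def tropPow {n : ℕ} (A : Matrix (Fin n) (Fin n) NNReal) :
    ℕ → Matrix (Fin n) (Fin n) NNReal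
  | 0 => fun i j => if i = j then 1 else 0
  | k + 1 => tropMul A (tropPow A k)

noncomputable def kleene {n : ℕ} (A : Matrix (Fin n) (Fin n) NNReal) :
    Matrix (Fin n) (Fin n) NNReal :=
  fun i j => (Finset.range n).sup fun k => tropPow A k i j

noncomputable def pathWeight {n : ℕ} (C : Matrix (Fin n) (Fin n) NNReal) :
    List (Fin n) → NNReal
  | [] => 1
  | [_] => 1
  | a :: b :: rest => C b a * pathWeight C (b :: rest)

/-- The tropical covariance matrix `Σ^trop = C* ⊙ (C*)ᵀ`. -/
noncomputable def tropCov {n : ℕ} (C : Matrix (Fin n) (Fin n) NNReal) :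
    Matrix (Fin n) (Fin n) NNReal :=
  tropMul (kleene C) (Matrix.transpose (kleene C))

-- associativity
lemma tropMul_assoc {n : ℕ} (A B D : Matrix (Fin n) (Fin n) NNReal) :
    tropMul (tropMul A B) D = tropMul A (tropMul B D) := by
  funext i j
  simp only [tropMul, NNReal.finset_sup_mul, NNReal.mul_finset_sup]
  rw [Finset.sup_comm]
  congr 1; funext l; congr 1; funext m; ring

lemma tropMul_one {n : ℕ} (A : Matrix (Fin n) (Fin n) NNReal) :
    tropMul A (tropPow A 0) = A := by
  funext i j
  simp only [tropMul, tropPow]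
  apply le_antisymm
  · exact Finset.sup_le fun l _ => by by_cases h : l = j <;> simp [h]
  · calc A i j = A i j * (if j = j then (1:NNReal) else 0) := by simp
    _ ≤ _ := Finset.le_sup (f := fun l => A i l * (if l = j then 1 else 0)) (mem_univ j)

lemma one_tropMul {n : ℕ} (A : Matrix (Fin n) (Fin n) NNReal) :
    tropMul (tropPow A 0) A = A := by
  funext i j
  simp only [tropMul, tropPow]
  apply le_antisymm
  · exact Finset.sup_le fun l _ => by by_cases h : i = l <;> simp [h]
  · calc A i j = (if i = i then (1:NNReal) else 0) * A i j := by simp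
    _ ≤ _ := Finset.le_sup (f := fun l => (if i = l then 1 else 0) * A l j) (mem_univ i)

lemma tropPow_succ' {n : ℕ} (A : Matrix (Fin n) (Fin n) NNReal) (k : ℕ) :
    tropPow A (k + 1) = tropMul (tropPow A k) A := by
  induction k with
  | zero => show tropMul A (tropPow A 0) = _; rw [tropMul_one, one_tropMul]
  | succ k ih =>
      show tropMul A (tropPow A (k+1)) = _
      rw [ih, ← tropMul_assoc]
      exact congrArg (fun M => tropMul M A) ih

lemma chain_transGen {α} {E : α → α → Prop} :
    ∀ (l : List α) (a b : α), List.Chain E a l → b ∈ l → Relation.TransGen E a b := by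
  intro l
  induction l with
  | nil => simp
  | cons c l ih =>
    intro a b hc hb
    replace hc : E a c ∧ List.Chain E c l := List.chain_cons.mp hc
    rcases List.mem_cons.mp hb with rfl | hb
    · exact Relation.TransGen.single hc.1
    · exact Relation.TransGen.head hc.1 (ih c b hc.2 hb)

lemma chain'_nodup {α} [DecidableEq α] {E : α → α → Prop}
    (hacyc : ∀ i, ¬ Relation.TransGen E i i) :
    ∀ p : List α, List.Chain' E p → p.Nodup := by
  intro p
  induction p with
  | nil => simp
  | cons a l ih =>
    intro h
    have hch : List.Chain E a l := h
    exact List.nodup_cons.mpr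
      ⟨fun hm => hacyc a (chain_transGen l a a hch hm), ih h.tail⟩

lemma pathWeight_append {n : ℕ} (C : Matrix (Fin n) (Fin n) NNReal) :
    ∀ (p : List (Fin n)) (m b : Fin n), p.getLast? = some m →
      pathWeight C (p ++ [b]) = pathWeight C p * C b m := by
  intro p
  induction p with
  | nil => simp
  | cons a l ih =>
    intro m b hl
    cases l with
    | nil =>
      simp only [List.getLast?_singleton, Option.some.injEq] at hl
      subst hl
      simp [pathWeight, mul_comm]
    | cons c l' =>
      have hl' : (c :: l').getLast? = some m := by rwa [List.getLast?_cons_cons] at hl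
      show C c a * pathWeight C ((c :: l') ++ [b]) = C c a * pathWeight C (c :: l') * C b m
      rw [ih m b hl', mul_assoc]

lemma pathWeight_le_tropPow {n : ℕ} (C : Matrix (Fin n) (Fin n) NNReal) :
    ∀ (p : List (Fin n)) (a b : Fin n), p.head? = some a → p.getLast? = some b →
      pathWeight C p ≤ tropPow C (p.length - 1) b a := by
  intro p
  induction p with
  | nil => simp
  | cons x l ih =>
    intro a b ha hb
    simp only [List.head?_cons, Option.some.injEq] at ha
    subst ha
    cases l with
    | nil =>
      simp only [List.getLast?_singleton, Option.some.injEq] at hb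
      subst hb
      simp [pathWeight, tropPow]
    | cons c l' =>
      have hb' : (c :: l').getLast? = some b := by rwa [List.getLast?_cons_cons] at hb
      have hih := ih c b rfl hb'
      show C c x * pathWeight C (c :: l') ≤ tropPow C ((x :: c :: l').length - 1) b x
      have hlen : (x :: c :: l').length - 1 = ((c :: l').length - 1) + 1 := by simp
      rw [hlen, tropPow_succ']
      calc C c x * pathWeight C (c :: l')
          ≤ tropPow C ((c :: l').length - 1) b c * C c x := by
            rw [mul_comm]; exact mul_le_mul_left hih _
        _ ≤ _ := Finset.le_sup
            (f := fun m => tropPow C ((c :: l').length - 1) b m * C m x) (mem_univ c)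

lemma tropPow_attain {n : ℕ} (E : Fin n → Fin n → Prop)
    (C : Matrix (Fin n) (Fin n) NNReal)
    (hsupp : ∀ i j, C i j ≠ 0 → E j i) :
    ∀ (k : ℕ) (i l : Fin n), tropPow C k i l ≠ 0 →
      ∃ p : List (Fin n), p.Chain' E ∧ p ≠ [] ∧ p.head? = some l ∧
        p.getLast? = some i ∧ pathWeight C p = tropPow C k i l := by
  intro k
  induction k with
  | zero =>
    intro i l h
    simp only [tropPow, ne_eq, ite_eq_right_iff, not_forall] at h
    obtain ⟨rfl, -⟩ := h
    exact ⟨[i], List.isChain_singleton i, by simp, rfl, rfl, by simp [pathWeight, tropPow]⟩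
  | succ k ih =>
    intro i l h
    obtain ⟨m, -, hm⟩ := Finset.exists_mem_eq_sup univ ⟨i, mem_univ i⟩
      (fun m => C i m * tropPow C k m l)
    have heq : tropPow C (k + 1) i l = C i m * tropPow C k m l := hm
    rw [heq] at h
    have h1 : C i m ≠ 0 := fun h0 => h (by rw [h0, zero_mul])
    have h2 : tropPow C k m l ≠ 0 := fun h0 => h (by rw [h0, mul_zero])
    obtain ⟨p, hc, hpne, hh, hl, hw⟩ := ih m l h2
    refine ⟨p ++ [i], ?_, by simp, ?_, by rw [List.getLast?_concat], ?_⟩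
    · refine List.isChain_append.mpr ?_
      refine ⟨hc, List.isChain_singleton i, ?_⟩
      intro x hx y hy
      rw [hl] at hx
      simp only [List.head?_cons, Option.mem_def, Option.some.injEq] at hx hy
      subst hx; subst hy
      exact hsupp i m h1
    · rcases p with - | ⟨x, p'⟩
      · exact absurd rfl hpne
      · simpa using hh
    · rw [pathWeight_append C p m i hl, hw, heq, mul_comm]

/-- **Tropical trek rule.** For `C` supported on a DAG `E`, the entry
`Σ^trop_{ij}` of `Σ^trop = C* ⊙ (C*)ᵀ` is the maximum, over all treks `τ` from `i` to `j`
(pairs of directed paths `p, q` from a common top vertex to `i` and to `j` respectively),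
of the trek monomial: the product of the coefficients `c_{ℓm}` over the edges `m → ℓ` of
the trek. -/
theorem tropical_trek_rule {n : ℕ} (E : Fin n → Fin n → Prop)
    (hacyc : ∀ i, ¬ Relation.TransGen E i i)
    (C : Matrix (Fin n) (Fin n) NNReal)
    (hsupp : ∀ i j, C i j ≠ 0 → E j i) (i j : Fin n) :
    tropCov C i j =
      sSup { w : NNReal | ∃ p q : List (Fin n),
        p.Chain' E ∧ q.Chain' E ∧ p ≠ [] ∧ q ≠ [] ∧ p.head? = q.head? ∧
        p.getLast? = some i ∧ q.getLast? = some j ∧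
        w = pathWeight C p * pathWeight C q } := by
  have hn : 0 < n := i.pos
  set S := { w : NNReal | ∃ p q : List (Fin n),
      p.Chain' E ∧ q.Chain' E ∧ p ≠ [] ∧ q ≠ [] ∧ p.head? = q.head? ∧
      p.getLast? = some i ∧ q.getLast? = some j ∧
      w = pathWeight C p * pathWeight C q } with hS
  -- every path weight is bounded by the corresponding kleene entry
  have hpath : ∀ (p : List (Fin n)) (a b : Fin n), p.Chain' E → p ≠ [] →
      p.head? = some a → p.getLast? = some b → pathWeight C p ≤ kleene C b a := by
    intro p a b hc hne ha hb
    have hnodup := chain'_nodup hacyc p hc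
    have hlen : p.length ≤ n := by
      simpa using hnodup.length_le_card
    have hlen1 : 1 ≤ p.length := List.length_pos_iff.mpr hne
    have hmem : p.length - 1 ∈ Finset.range n := Finset.mem_range.mpr (by omega)
    calc pathWeight C p ≤ tropPow C (p.length - 1) b a :=
          pathWeight_le_tropPow C p a b ha hb
      _ ≤ kleene C b a := Finset.le_sup (f := fun k => tropPow C k b a) hmem
  -- upper bound: every element of S is ≤ tropCov C i j
  have hub : tropCov C i j ∈ upperBounds S := by
    rintro w ⟨p, q, hp, hq, hpne, hqne, htop, hpl, hql, rfl⟩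
    obtain ⟨a, ha⟩ : ∃ a, p.head? = some a := by
      rcases p with - | ⟨x, p'⟩
      · exact absurd rfl hpne
      · exact ⟨x, rfl⟩
    have haq : q.head? = some a := htop ▸ ha
    have h1 := hpath p a i hp hpne ha hpl
    have h2 := hpath q a j hq hqne haq hql
    calc pathWeight C p * pathWeight C q ≤ kleene C i a * kleene C j a :=
          mul_le_mul' h1 h2
      _ ≤ tropCov C i j := Finset.le_sup
          (f := fun l => kleene C i l * (kleene C).transpose l j) (mem_univ a)
  refine le_antisymm ?_ (csSup_le' hub)
  -- tropCov C i j ≤ sSup S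
  show (univ.sup fun l => kleene C i l * (kleene C).transpose l j) ≤ sSup S
  apply Finset.sup_le
  intro l _
  show kleene C i l * kleene C j l ≤ sSup S
  obtain ⟨k, -, hk⟩ := Finset.exists_mem_eq_sup (Finset.range n)
    ⟨0, Finset.mem_range.mpr hn⟩ (fun k => tropPow C k i l)
  obtain ⟨k', -, hk'⟩ := Finset.exists_mem_eq_sup (Finset.range n)
    ⟨0, Finset.mem_range.mpr hn⟩ (fun k => tropPow C k j l)
  have hkl : kleene C i l = tropPow C k i l := hk
  have hkl' : kleene C j l = tropPow C k' j l := hk'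
  rw [hkl, hkl']
  by_cases hz : tropPow C k i l * tropPow C k' j l = 0
  · rw [hz]; exact zero_le
  · obtain ⟨h1, h2⟩ := mul_ne_zero_iff.mp hz
    obtain ⟨p, hpc, hpne, hph, hpl, hpw⟩ := tropPow_attain E C hsupp k i l h1
    obtain ⟨q, hqc, hqne, hqh, hql, hqw⟩ := tropPow_attain E C hsupp k' j l h2
    have hmem : tropPow C k i l * tropPow C k' j l ∈ S :=
      ⟨p, q, hpc, hqc, hpne, hqne, hph.trans hqh.symm, hpl, hql, by rw [hpw, hqw]⟩
    exact le_csSup ⟨tropCov C i j, hub⟩ hmem
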